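/- Let M, N ∈ Mat_{r×s}(ℂ) with Tr(M†M) = 1, let t = min(r,s), and suppose ε ≥ 0 satisfies both ‖MN†‖₁ ≤ 6√2·ε, ‖NM†‖₁ ≤ 6√2·ε, and ‖N†N − M†M‖₁ ≤ 2√2·ε. Then 72ε² ≥ 1/t − 2√2·ε, and consequently ε ≥ (√2/72)·(−1 + √(1 + 36/t)). -/

import Mathlib

open Matrix Complex
open scoped ComplexOrder Classical

noncomputable def matSqrt {n : Type*} [Fintype n] [DecidableEq n]
    (A : Matrix n n ℂ) : Matrix n n ℂ :=
  if h : A.PosSemidef then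
    (h.1.eigenvectorUnitary : Matrix n n ℂ) *
      diagonal ((↑) ∘ (Real.sqrt ∘ h.1.eigenvalues)) *
      (star (h.1.eigenvectorUnitary : Matrix n n ℂ))
  else 0

noncomputable def traceNorm {m n : Type*} [Fintype m] [Fintype n] [DecidableEq n]
    (A : Matrix m n ℂ) : ℝ :=
  ((matSqrt (Aᴴ * A)).trace).re

noncomputable def frobNorm {m n : Type*} [Fintype m] [Fintype n]
    (A : Matrix m n ℂ) : ℝ :=
  Real.sqrt (((Aᴴ * A).trace).re)

noncomputable def fidelity {n : Type*} [Fintype n] [DecidableEq n]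
    (P Q : Matrix n n ℂ) : ℝ :=
  ((matSqrt (matSqrt P * Q * matSqrt P)).trace).re

/-- The outer product |ψ⟩⟨ψ| of a vector. -/
noncomputable def outerMat {ι : Type*} (ψ : ι → ℂ) : Matrix ι ι ℂ :=
  fun p q => ψ p * (starRingEnd ℂ) (ψ q)

/-- Partial trace over the first (A) factor. -/
noncomputable def ptraceA {r s : ℕ} (ρ : Matrix (Fin r × Fin s) (Fin r × Fin s) ℂ) :
    Matrix (Fin s) (Fin s) ℂ :=
  fun k l => ∑ i : Fin r, ρ (i, k) (i, l)

/-- Partial trace over the second (B) factor. -/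
noncomputable def ptraceB {r s : ℕ} (ρ : Matrix (Fin r × Fin s) (Fin r × Fin s) ℂ) :
    Matrix (Fin r) (Fin r) ℂ :=
  fun i j => ∑ k : Fin s, ρ (i, k) (j, k)

section Aux

set_option linter.unusedSectionVars false

variable {m n : Type*} [Fintype m] [Fintype n] [DecidableEq n]

lemma herm_trace_eq {A : Matrix n n ℂ} (hA : A.IsHermitian) :
    A.trace = ((∑ i, hA.eigenvalues i : ℝ) : ℂ) := by
  have h1 : star (hA.eigenvectorUnitary : Matrix n n ℂ) * (hA.eigenvectorUnitary : Matrix n n ℂ) = 1 :=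
    Matrix.mem_unitaryGroup_iff'.mp hA.eigenvectorUnitary.2
  nth_rewrite 1 [hA.spectral_theorem, Unitary.conjStarAlgAut_apply]
  rw [Matrix.trace_mul_comm, ← Matrix.mul_assoc, h1, Matrix.one_mul, Matrix.trace_diagonal]
  push_cast
  simp

lemma psd_trace_sq {S : Matrix n n ℂ} (hS : S.PosSemidef) :
    (S * S).trace = ((∑ i, hS.1.eigenvalues i ^ 2 : ℝ) : ℂ) := by
  set U : Matrix n n ℂ := (hS.1.eigenvectorUnitary : Matrix n n ℂ) with hU
  have h2 : U * star U = 1 := Matrix.mem_unitaryGroup_iff.mp hS.1.eigenvectorUnitary.2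
  have hd : star U * S * U = diagonal (RCLike.ofReal ∘ hS.1.eigenvalues) := by
    have := hS.1.conjStarAlgAut_star_eigenvectorUnitary
    rwa [Unitary.conjStarAlgAut_star_apply] at this
  have e : (star U * S * U) * (star U * S * U) = star U * (S * S) * U := by
    rw [Matrix.mul_assoc (star U * S) U ((star U * S)*U), ← Matrix.mul_assoc U (star U * S) U,
      ← Matrix.mul_assoc U (star U) S, h2, Matrix.one_mul,
      Matrix.mul_assoc (star U) S (S*U), ← Matrix.mul_assoc S S U, ← Matrix.mul_assoc]
  have step1 : ((star U * (S*S)) * U).trace = (S*S).trace := by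
    rw [Matrix.trace_mul_comm (star U * (S*S)) U, ← Matrix.mul_assoc, h2, Matrix.one_mul]
  calc (S*S).trace = ((star U * (S*S)) * U).trace := step1.symm
    _ = ((star U * S * U) * (star U * S * U)).trace := by rw [e, Matrix.mul_assoc]
    _ = ((∑ i, hS.1.eigenvalues i ^ 2 : ℝ) : ℂ) := by
        rw [hd, Matrix.diagonal_mul_diagonal, Matrix.trace_diagonal]
        push_cast
        simp [pow_two]

lemma trace_AHB_re (A B : Matrix m n ℂ) :
    ((Aᴴ * B).trace).re = ∑ j, ∑ i, ((starRingEnd ℂ) (A i j) * B i j).re := by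
  simp [Matrix.trace, Matrix.diag, Matrix.mul_apply, Matrix.conjTranspose_apply, Complex.re_sum]

lemma trace_AHA_re (A : Matrix m n ℂ) :
    ((Aᴴ * A).trace).re = ∑ j, ∑ i, ‖A i j‖ ^ 2 := by
  rw [trace_AHB_re]
  refine Finset.sum_congr rfl fun j _ => Finset.sum_congr rfl fun i _ => ?_
  rw [mul_comm, Complex.mul_conj]
  rw [Complex.ofReal_re, ← Complex.sq_norm]

lemma trace_AHA_re_nonneg (A : Matrix m n ℂ) : 0 ≤ ((Aᴴ * A).trace).re := by
  rw [trace_AHA_re]; positivity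

lemma frobNorm_sq (A : Matrix m n ℂ) : frobNorm A ^ 2 = ((Aᴴ * A).trace).re :=
  Real.sq_sqrt (trace_AHA_re_nonneg A)

lemma frobNorm_nonneg (A : Matrix m n ℂ) : 0 ≤ frobNorm A := Real.sqrt_nonneg _

lemma abs_trace_AHB_le (A B : Matrix m n ℂ) :
    |((Aᴴ * B).trace).re| ≤ frobNorm A * frobNorm B := by
  rw [trace_AHB_re]
  have step1 : |∑ j, ∑ i, ((starRingEnd ℂ) (A i j) * B i j).re| ≤ ∑ j, ∑ i, ‖A i j‖ * ‖B i j‖ := by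
    refine (Finset.abs_sum_le_sum_abs _ _).trans (Finset.sum_le_sum fun j _ => ?_)
    refine (Finset.abs_sum_le_sum_abs _ _).trans (Finset.sum_le_sum fun i _ => ?_)
    calc |((starRingEnd ℂ) (A i j) * B i j).re| ≤ ‖(starRingEnd ℂ) (A i j) * B i j‖ :=
          Complex.abs_re_le_norm _
      _ = ‖A i j‖ * ‖B i j‖ := by rw [norm_mul, RCLike.norm_conj]
  refine step1.trans ?_
  unfold frobNorm
  rw [trace_AHA_re A, trace_AHA_re B]
  have cs := Real.sum_mul_le_sqrt_mul_sqrt (Finset.univ : Finset (n × m))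
    (fun p => ‖A p.2 p.1‖) (fun p => ‖B p.2 p.1‖)
  simp only [Fintype.sum_prod_type] at cs
  exact cs

lemma sum_sq_le_sq_sum (f : n → ℝ) (hf : ∀ i, 0 ≤ f i) :
    ∑ i, f i ^ 2 ≤ (∑ i, f i) ^ 2 := by
  calc ∑ i, f i ^ 2 ≤ ∑ i, f i * ∑ j, f j := by
        refine Finset.sum_le_sum fun i _ => ?_
        have h := Finset.single_le_sum (fun j (_ : j ∈ Finset.univ) => hf j) (Finset.mem_univ i)
        nlinarith [hf i]
    _ = (∑ i, f i) * ∑ j, f j := by rw [← Finset.sum_mul]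
    _ = (∑ i, f i) ^ 2 := (pow_two _).symm

/-- Tr(S²) ≤ (Tr S)² for PSD S. -/
lemma psd_trace_sq_le {S : Matrix n n ℂ} (hS : S.PosSemidef) :
    ((S * S).trace).re ≤ (S.trace.re) ^ 2 := by
  rw [psd_trace_sq hS, herm_trace_eq hS.1, Complex.ofReal_re, Complex.ofReal_re]
  exact sum_sq_le_sq_sum _ hS.eigenvalues_nonneg

/-- (Tr S)² ≤ n · Tr(S²) for Hermitian S. -/
lemma psd_sq_trace_le {S : Matrix n n ℂ} (hS : S.PosSemidef) :
    (S.trace.re) ^ 2 ≤ (Fintype.card n : ℝ) * ((S * S).trace).re := by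
  rw [psd_trace_sq hS, herm_trace_eq hS.1, Complex.ofReal_re, Complex.ofReal_re]
  have := sq_sum_le_card_mul_sum_sq (s := (Finset.univ : Finset n)) (f := hS.1.eigenvalues)
  simpa using this

lemma frobNorm_le_traceNorm (A : Matrix m n ℂ) : frobNorm A ≤ traceNorm A := by
  have hP := Matrix.posSemidef_conjTranspose_mul_self A
  have h1 : star (hP.1.eigenvectorUnitary : Matrix n n ℂ) * (hP.1.eigenvectorUnitary : Matrix n n ℂ) = 1 :=
    Matrix.mem_unitaryGroup_iff'.mp hP.1.eigenvectorUnitary.2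
  have hnn : ∀ i, 0 ≤ Real.sqrt (hP.1.eigenvalues i) := fun i => Real.sqrt_nonneg _
  have htr : traceNorm A = ∑ i, Real.sqrt (hP.1.eigenvalues i) := by
    unfold traceNorm matSqrt
    rw [dif_pos hP, Matrix.trace_mul_comm, ← Matrix.mul_assoc, h1, Matrix.one_mul,
      Matrix.trace_diagonal]
    simp [Complex.re_sum]
  have hfr : ((Aᴴ * A).trace).re = ∑ i, hP.1.eigenvalues i := by
    rw [herm_trace_eq hP.1, Complex.ofReal_re]
  rw [htr]
  unfold frobNorm
  rw [hfr]
  calc Real.sqrt (∑ i, hP.1.eigenvalues i)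
        = Real.sqrt (∑ i, Real.sqrt (hP.1.eigenvalues i) ^ 2) := by
          congr 1
          exact Finset.sum_congr rfl fun i _ => (Real.sq_sqrt (hP.eigenvalues_nonneg i)).symm
    _ ≤ Real.sqrt ((∑ i, Real.sqrt (hP.1.eigenvalues i)) ^ 2) :=
          Real.sqrt_le_sqrt (sum_sq_le_sq_sum _ hnn)
    _ = ∑ i, Real.sqrt (hP.1.eigenvalues i) := Real.sqrt_sq (Finset.sum_nonneg fun i _ => hnn i)

end Aux

set_option maxHeartbeats 1000000 in
/-- Combining the bounds `‖MN†‖₁, ‖NM†‖₁ ≤ 6√2 ε` and `‖N†N - M†M‖₁ ≤ 2√2 ε` with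
`Tr(M†M) = 1` yields `72 ε² ≥ 1/t - 2√2 ε` with `t = min r s`, and hence
`ε ≥ (√2/72)(-1 + √(1 + 36/t))`. -/
theorem stmt11 {r s : ℕ} (hr : 1 ≤ r) (hs : 1 ≤ s)
    (M N : Matrix (Fin r) (Fin s) ℂ) (ε : ℝ) (hε : 0 ≤ ε)
    (hM : (Mᴴ * M).trace = 1)
    (h1 : traceNorm (M * Nᴴ) ≤ 6 * Real.sqrt 2 * ε)
    (h2 : traceNorm (N * Mᴴ) ≤ 6 * Real.sqrt 2 * ε)
    (h3 : traceNorm (Nᴴ * N - Mᴴ * M) ≤ 2 * Real.sqrt 2 * ε) :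
    1 / (min r s : ℝ) - 2 * Real.sqrt 2 * ε ≤ 72 * ε ^ 2 ∧
      Real.sqrt 2 / 72 * (-1 + Real.sqrt (1 + 36 / (min r s : ℝ))) ≤ ε := by
  have s2nn : (0:ℝ) ≤ Real.sqrt 2 := Real.sqrt_nonneg 2
  have s2sq : Real.sqrt 2 ^ 2 = 2 := Real.sq_sqrt (by norm_num)
  set P : Matrix (Fin s) (Fin s) ℂ := Mᴴ * M with hPdef
  set Q : Matrix (Fin s) (Fin s) ℂ := Nᴴ * N with hQdef
  have hP : P.PosSemidef := Matrix.posSemidef_conjTranspose_mul_self M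
  have hRpsd : (M * Mᴴ).PosSemidef := Matrix.posSemidef_self_mul_conjTranspose M
  have e1 : P.trace.re = 1 := by rw [hM]; simp
  set c : ℝ := ((P * P).trace).re with hcdef
  -- upper bound on Tr(PQ)
  have hPQtr : (P * Q).trace = (((N * Mᴴ)ᴴ) * (N * Mᴴ)).trace := by
    rw [Matrix.conjTranspose_mul, Matrix.conjTranspose_conjTranspose, hPdef, hQdef]
    rw [Matrix.mul_assoc Mᴴ M (Nᴴ * N), Matrix.trace_mul_comm]
    simp only [Matrix.mul_assoc]
  have hfq : frobNorm (N * Mᴴ) ≤ 6 * Real.sqrt 2 * ε := (frobNorm_le_traceNorm _).trans h2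
  have hPQ : ((P * Q).trace).re ≤ 72 * ε ^ 2 := by
    rw [hPQtr, ← frobNorm_sq]
    nlinarith [frobNorm_nonneg (N * Mᴴ)]
  -- bound on Tr(P X)
  set X : Matrix (Fin s) (Fin s) ℂ := Q - P with hXdef
  have hfX : frobNorm X ≤ 2 * Real.sqrt 2 * ε := (frobNorm_le_traceNorm _).trans h3
  have hfP : frobNorm P ≤ 1 := by
    have h1' : ((Pᴴ * P).trace).re ≤ 1 := by
      rw [hP.1]
      have := psd_trace_sq_le hP
      rw [e1] at this; simpa using this
    have := Real.sqrt_le_sqrt h1'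
    simpa [frobNorm] using this
  have hPX : |((P * X).trace).re| ≤ 2 * Real.sqrt 2 * ε := by
    have h := abs_trace_AHB_le P X
    rw [hP.1] at h
    calc |((P * X).trace).re| ≤ frobNorm P * frobNorm X := h
      _ ≤ 1 * (2 * Real.sqrt 2 * ε) := by
          apply mul_le_mul hfP hfX (frobNorm_nonneg _) (by norm_num)
      _ = 2 * Real.sqrt 2 * ε := one_mul _
  -- decompose
  have hdec : (P * Q).trace = (P * P).trace + (P * X).trace := by
    rw [hXdef, Matrix.mul_sub, Matrix.trace_sub]; ring
  have hcub : c ≤ 72 * ε ^ 2 + 2 * Real.sqrt 2 * ε := by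
    have : ((P * Q).trace).re = c + ((P * X).trace).re := by
      rw [hdec]; simp [hcdef]
    have habs := abs_le.mp hPX
    linarith [hPQ, this]
  -- lower bound 1 ≤ t * c
  have hcs : (1:ℝ) ≤ (s:ℝ) * c := by
    have := psd_sq_trace_le hP
    rw [e1] at this; simpa using this
  have hcr : (1:ℝ) ≤ (r:ℝ) * c := by
    have htrR : (M * Mᴴ).trace.re = 1 := by rw [Matrix.trace_mul_comm, hM]; simp
    have htrRR : (((M * Mᴴ) * (M * Mᴴ)).trace) = ((P * P).trace) := by
      rw [Matrix.trace_mul_comm (M * Mᴴ) (M * Mᴴ)]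
      rw [show (M * Mᴴ) * (M * Mᴴ) = M * (Mᴴ * M * Mᴴ) by simp only [Matrix.mul_assoc]]
      rw [Matrix.trace_mul_comm M (Mᴴ * M * Mᴴ), hPdef]
      simp only [Matrix.mul_assoc]
    have := psd_sq_trace_le hRpsd
    rw [htrR, htrRR] at this; simpa [hcdef] using this
  have htmin : (1:ℝ) ≤ (min r s : ℝ) * c := by
    rcases le_total r s with h | h
    · rwa [min_eq_left (by exact_mod_cast h : (r:ℝ) ≤ (s:ℝ))]
    · rwa [min_eq_right (by exact_mod_cast h : (s:ℝ) ≤ (r:ℝ))]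
  have htpos : (0:ℝ) < (min r s : ℝ) := by
    have h1 : (0:ℝ) < (r:ℝ) := by exact_mod_cast hr
    have h2 : (0:ℝ) < (s:ℝ) := by exact_mod_cast hs
    exact lt_min h1 h2
  have hinv : 1 / (min r s : ℝ) ≤ c := by
    rw [div_le_iff₀ htpos]
    linarith [htmin]
  have part1 : 1 / (min r s : ℝ) - 2 * Real.sqrt 2 * ε ≤ 72 * ε ^ 2 := by
    linarith [hinv, hcub]
  refine ⟨part1, ?_⟩
  -- quadratic
  set t : ℝ := (min r s : ℝ)
  have hu : Real.sqrt (1 + 36 / t) ^ 2 = 1 + 36 / t := by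
    apply Real.sq_sqrt
    positivity
  have h36 : (0:ℝ) < 36 / t := by positivity
  have hu0 : (0:ℝ) ≤ Real.sqrt (1 + 36 / t) := Real.sqrt_nonneg _
  have hu1 : (1:ℝ) ≤ Real.sqrt (1 + 36 / t) := by
    nlinarith [hu, hu0, h36]
  set u : ℝ := Real.sqrt (1 + 36 / t)
  have hteq : 36 / t = u ^ 2 - 1 := by rw [hu]; ring
  have h1t : 1 / t = (u ^ 2 - 1) / 36 := by
    rw [← hteq]; ring
  rw [h1t] at part1
  nlinarith [s2sq, s2nn, hu1, sq_nonneg (72 * ε + Real.sqrt 2 - Real.sqrt 2 * u), mul_nonneg s2nn hε, sq_nonneg (u - 1)]
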